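/- For every n ≥ 2 there exists a ℂ-algebra homomorphism ψ: ℰ_n(1) → ℂ[W_n] with ψ(T_i) = s_i and ψ(E_i) = ½(1 + t_it_{i+1}) for all 1 ≤ i ≤ n−1. Equivalently, the elements σ_i := s_i and e_i := ½(1 + t_it_{i+1}) of the group algebra ℂ[W_n] satisfy all the defining relations of ℰ_n(1). -/
import Mathlib


noncomputable section

open FreeAlgebra

/-- Generators of the algebra `ℰ_n(1)`: `T i` and `E i` for `i` ranging over
`n - 1` indices. -/
inductive Gen (n : ℕ) : Type
  | T : Fin (n - 1) → Gen n
  | E : Fin (n - 1) → Gen n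

/-- The free `ℂ`-algebra on the generators. -/
abbrev FA (n : ℕ) : Type := FreeAlgebra ℂ (Gen n)

def fT {n : ℕ} (i : Fin (n - 1)) : FA n := ι ℂ (Gen.T i)
def fE {n : ℕ} (i : Fin (n - 1)) : FA n := ι ℂ (Gen.E i)

/-- The defining relations of `ℰ_n(1)`. -/
inductive E1Rel (n : ℕ) : FA n → FA n → Prop
  | TTfar {i j : Fin (n - 1)} : 1 < Nat.dist i j →
      E1Rel n (fT i * fT j) (fT j * fT i)
  | braid {i j : Fin (n - 1)} : Nat.dist i j = 1 →
      E1Rel n (fT i * fT j * fT i) (fT j * fT i * fT j)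
  | Eidem (i : Fin (n - 1)) : E1Rel n (fE i * fE i) (fE i)
  | EE (i j : Fin (n - 1)) : E1Rel n (fE i * fE j) (fE j * fE i)
  | ET (i : Fin (n - 1)) : E1Rel n (fE i * fT i) (fT i * fE i)
  | ETfar {i j : Fin (n - 1)} : 1 < Nat.dist i j →
      E1Rel n (fE i * fT j) (fT j * fE i)
  | ETT {i j : Fin (n - 1)} : Nat.dist i j = 1 →
      E1Rel n (fE j * (fT i * fT j)) (fT i * fT j * fE i)
  | EET {i j : Fin (n - 1)} : Nat.dist i j = 1 →
      E1Rel n (fE i * fE j * fT j) (fE i * fT j * fE i)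
  | ETE {i j : Fin (n - 1)} : Nat.dist i j = 1 →
      E1Rel n (fE i * fT j * fE i) (fT j * (fE i * fE j))
  | Tsq (i : Fin (n - 1)) : E1Rel n (fT i * fT i) 1

/-- The algebra `ℰ_n(1)`. -/
abbrev En1 (n : ℕ) : Type := RingQuot (E1Rel n)

/-- The generator `T i` of `ℰ_n(1)`. -/
def T {n : ℕ} (i : Fin (n - 1)) : En1 n := RingQuot.mkAlgHom ℂ (E1Rel n) (fT i)

/-- The generator `E i` of `ℰ_n(1)`. -/
def E {n : ℕ} (i : Fin (n - 1)) : En1 n := RingQuot.mkAlgHom ℂ (E1Rel n) (fE i)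

noncomputable section

/-- `C_2^n`, written multiplicatively. -/
abbrev C2n (n : ℕ) : Type := Fin n → Multiplicative (ZMod 2)

/-- The permutation action of `S_n` on `C_2^n` by permuting coordinates. -/
def permAct (n : ℕ) : Equiv.Perm (Fin n) →* MulAut (C2n n) where
  toFun σ :=
    { toFun := fun v i => v (σ⁻¹ i)
      invFun := fun v i => v (σ i)
      left_inv := fun v => funext fun i => by simp
      right_inv := fun v => funext fun i => by simp
      map_mul' := fun v w => rfl }
  map_one' := by
    ext v i
    simp
  map_mul' := fun σ τ => by
    ext v i
    simp [mul_inv_rev]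

/-- The hyperoctahedral group `W_n = C_2 ≀ S_n`, realized as the semidirect
product `(ZMod 2)^n ⋊ S_n`. -/
abbrev W (n : ℕ) : Type := C2n n ⋊[permAct n] Equiv.Perm (Fin n)

/-- The element `t_i` of `W_n`: `i`-th standard basis vector, trivial permutation. -/
def tgen (n : ℕ) (i : Fin n) : W n :=
  SemidirectProduct.inl (fun j => if j = i then Multiplicative.ofAdd 1 else 1)

/-- The element `s_i` of `W_n`: the adjacent transposition `(i, i+1)`, trivial
vector part. -/
def sgen (n : ℕ) (i : ℕ) (h : i + 1 < n) : W n :=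
  SemidirectProduct.inr (Equiv.swap ⟨i, by omega⟩ ⟨i + 1, h⟩)


namespace Aux
open SemidirectProduct
variable {n : ℕ}

lemma zmod2_sq : (Multiplicative.ofAdd (1 : ZMod 2)) * Multiplicative.ofAdd 1 = 1 := by decide

lemma tgen_comm (i j : Fin n) : tgen n i * tgen n j = tgen n j * tgen n i := by
  unfold tgen; rw [← map_mul, ← map_mul, mul_comm]

lemma tgen_sq (i : Fin n) : tgen n i * tgen n i = 1 := by
  unfold tgen
  rw [← map_mul]
  convert map_one (inl (G := Equiv.Perm (Fin n)) (φ := permAct n))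
  funext j
  by_cases h : j = i <;> simp [h, zmod2_sq]

lemma inr_mul_inl {N G : Type*} [Group N] [Group G] (φ : G →* MulAut N) (g : G) (v : N) :
    (inr g * inl v : N ⋊[φ] G) = inl (φ g v) * inr g := by
  rw [inl_aut, mul_assoc, ← map_mul, inv_mul_cancel, map_one, mul_one]

lemma sgen_mul_tgen (k : ℕ) (h : k + 1 < n) (i : Fin n) :
    sgen n k h * tgen n i
      = tgen n (Equiv.swap ⟨k, by omega⟩ ⟨k + 1, h⟩ i) * sgen n k h := by
  unfold sgen tgen
  rw [inr_mul_inl]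
  congr 1
  congr 1
  funext j
  simp only [permAct, MonoidHom.coe_mk, OneHom.coe_mk, MulEquiv.coe_mk, Equiv.coe_fn_mk]
  congr 1
  rw [Equiv.swap_inv]
  apply propext
  constructor <;> (rintro rfl; simp [Equiv.swap_apply_self])

/-! ### index embeddings -/

def pfin (i : Fin (n - 1)) : Fin n := ⟨i, by have := i.isLt; omega⟩
def qfin (i : Fin (n - 1)) : Fin n := ⟨(i : ℕ) + 1, by have := i.isLt; omega⟩

def dvec (k : Fin n) : C2n n := fun j => if j = k then Multiplicative.ofAdd 1 else 1

lemma tgen_eq (k : Fin n) : tgen n k = inl (dvec k) := rfl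

lemma dvec_sq (k : Fin n) : dvec (n := n) k * dvec k = 1 := by
  funext j; by_cases h : j = k <;> simp [dvec, h, zmod2_sq]

lemma dvec_sq' (k : Fin n) (x : C2n n) : dvec k * (dvec k * x) = x := by
  rw [← mul_assoc, dvec_sq, one_mul]

lemma dvec_comm (k l : Fin n) : dvec (n := n) k * dvec l = dvec l * dvec k := mul_comm _ _

lemma permAct_dvec (σ : Equiv.Perm (Fin n)) (k : Fin n) :
    permAct n σ (dvec k) = dvec (σ k) := by
  funext j
  simp only [permAct, dvec, MonoidHom.coe_mk, OneHom.coe_mk, MulEquiv.coe_mk, Equiv.coe_fn_mk]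
  congr 1
  apply propext
  rw [Equiv.Perm.inv_def, Equiv.symm_apply_eq]

/-- the defining permutation of `sg i` -/
def sswap (i : Fin (n - 1)) : Equiv.Perm (Fin n) := Equiv.swap (pfin i) (qfin i)

def sg (i : Fin (n - 1)) : W n := sgen n i (by have := i.isLt; omega)

lemma sg_eq (i : Fin (n - 1)) : sg i = inr (sswap i) := rfl

def ag (i : Fin (n - 1)) : W n :=
  tgen n ⟨(i : ℕ), by have := i.isLt; omega⟩ * tgen n ⟨(i : ℕ) + 1, by have := i.isLt; omega⟩

lemma ag_eq (i : Fin (n - 1)) : ag i = inl (dvec (pfin i) * dvec (qfin i)) := by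
  rw [ag, map_mul]; rfl

lemma ag_comm (i j : Fin (n - 1)) : ag (n := n) i * ag j = ag j * ag i := by
  rw [ag_eq, ag_eq, ← map_mul, ← map_mul, mul_comm]

lemma ag_sq (i : Fin (n - 1)) : ag (n := n) i * ag i = 1 := by
  rw [ag_eq, ← map_mul, mul_mul_mul_comm, dvec_sq, dvec_sq, one_mul, map_one]

lemma sg_sq (i : Fin (n - 1)) : sg (n := n) i * sg i = 1 := by
  rw [sg_eq, ← map_mul, sswap, Equiv.swap_mul_self, map_one]

lemma sg_mul_inl (i : Fin (n - 1)) (v : C2n n) :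
    sg i * inl v = inl (permAct n (sswap i) v) * sg i := by
  rw [sg_eq, inr_mul_inl]

lemma sg_mul_ag (i j : Fin (n - 1)) :
    sg (n := n) j * ag i
      = inl (dvec (sswap j (pfin i)) * dvec (sswap j (qfin i))) * sg j := by
  rw [ag_eq, sg_mul_inl, map_mul, permAct_dvec, permAct_dvec]

lemma sg_mul_ag_self (i : Fin (n - 1)) : sg (n := n) i * ag i = ag i * sg i := by
  rw [sg_mul_ag, sswap, Equiv.swap_apply_left, Equiv.swap_apply_right, mul_comm, ag_eq]

lemma sg_mul_ag_far {i j : Fin (n - 1)} (h : 1 < Nat.dist i j) :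
    sg (n := n) j * ag i = ag i * sg j := by
  simp only [Nat.dist] at h
  rw [sg_mul_ag, sswap,
    Equiv.swap_apply_of_ne_of_ne
      (Fin.ne_of_val_ne (by simp only [pfin, qfin]; omega))
      (Fin.ne_of_val_ne (by simp only [pfin, qfin]; omega)),
    Equiv.swap_apply_of_ne_of_ne
      (Fin.ne_of_val_ne (by simp only [pfin, qfin]; omega))
      (Fin.ne_of_val_ne (by simp only [pfin, qfin]; omega)),
    ag_eq]

lemma sg_mul_ag_adj {i j : Fin (n - 1)} (h : Nat.dist i j = 1) :
    sg (n := n) j * ag i = (ag i * ag j) * sg j := by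
  simp only [Nat.dist] at h
  rw [sg_mul_ag, ag_eq, ag_eq, ← map_mul]
  rcases Nat.lt_or_ge (i : ℕ) (j : ℕ) with hij | hij
  · -- j = i + 1
    have hj : (j : ℕ) = (i : ℕ) + 1 := by omega
    have h1 : sswap j (pfin i) = pfin i :=
      Equiv.swap_apply_of_ne_of_ne
        (Fin.ne_of_val_ne (by simp only [pfin, qfin]; omega))
        (Fin.ne_of_val_ne (by simp only [pfin, qfin]; omega))
    have h2 : sswap j (qfin i) = qfin j := by
      have : qfin (n := n) i = pfin j := by simp [pfin, qfin, Fin.ext_iff, hj]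
      rw [this, sswap, Equiv.swap_apply_left]
    have h3 : pfin (n := n) j = qfin i := by simp [pfin, qfin, Fin.ext_iff, hj]
    rw [h1, h2, h3]
    congr 1
    simp only [mul_comm, mul_left_comm, mul_assoc, dvec_sq, dvec_sq', mul_one, one_mul]
  · -- i = j + 1
    have hi : (i : ℕ) = (j : ℕ) + 1 := by omega
    have h1 : sswap j (pfin i) = pfin j := by
      have : pfin (n := n) i = qfin j := by simp [pfin, qfin, Fin.ext_iff, hi]
      rw [this, sswap, Equiv.swap_apply_right]
    have h2 : sswap j (qfin i) = qfin i :=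
      Equiv.swap_apply_of_ne_of_ne
        (Fin.ne_of_val_ne (by simp only [pfin, qfin]; omega))
        (Fin.ne_of_val_ne (by simp only [pfin, qfin]; omega))
    have h4 : qfin (n := n) j = pfin i := by simp [pfin, qfin, Fin.ext_iff, hi]
    rw [h1, h2, h4]
    congr 1
    simp only [mul_comm, mul_left_comm, mul_assoc, dvec_sq, dvec_sq', mul_one, one_mul]

lemma sg_comm_far {i j : Fin (n - 1)} (h : 1 < Nat.dist i j) :
    sg (n := n) i * sg j = sg j * sg i := by
  simp only [Nat.dist] at h
  rw [sg_eq, sg_eq, ← map_mul, ← map_mul]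
  congr 1
  ext x
  rcases x with ⟨x, hx⟩
  simp only [sswap, pfin, qfin, Equiv.Perm.mul_apply, Equiv.swap_apply_def]
  split_ifs <;> (simp only [Fin.mk.injEq] at *) <;> omega

lemma swap_braid_key {α : Type*} [DecidableEq α] (a b c : α)
    (hab : a ≠ b) (hbc : b ≠ c) (hac : a ≠ c) :
    Equiv.swap a b * Equiv.swap b c * Equiv.swap a b
      = Equiv.swap b c * Equiv.swap a b * Equiv.swap b c := by
  calc Equiv.swap a b * Equiv.swap b c * Equiv.swap a b
      = Equiv.swap b a * Equiv.swap c b * Equiv.swap b a := by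
        rw [Equiv.swap_comm a b, Equiv.swap_comm b c]
    _ = Equiv.swap a c := Equiv.swap_mul_swap_mul_swap hbc.symm hac.symm
    _ = Equiv.swap c a := Equiv.swap_comm a c
    _ = Equiv.swap b c * Equiv.swap a b * Equiv.swap b c :=
        (Equiv.swap_mul_swap_mul_swap hab hac).symm

lemma sg_braid {i j : Fin (n - 1)} (h : Nat.dist i j = 1) :
    sg (n := n) i * sg j * sg i = sg j * sg i * sg j := by
  simp only [Nat.dist] at h
  rw [sg_eq, sg_eq, ← map_mul, ← map_mul, ← map_mul, ← map_mul]
  congr 1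
  rcases Nat.lt_or_ge (i : ℕ) (j : ℕ) with hij | hij
  · have hj : (j : ℕ) = (i : ℕ) + 1 := by omega
    have hpj : pfin (n := n) j = qfin i := by simp [pfin, qfin, Fin.ext_iff, hj]
    rw [sswap, sswap, hpj]
    exact swap_braid_key _ _ _
      (Fin.ne_of_val_ne (by simp [pfin, qfin]))
      (Fin.ne_of_val_ne (by simp only [pfin, qfin]; omega))
      (Fin.ne_of_val_ne (by simp only [pfin, qfin]; omega))
  · have hi : (i : ℕ) = (j : ℕ) + 1 := by omega
    have hpi : pfin (n := n) i = qfin j := by simp [pfin, qfin, Fin.ext_iff, hi]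
    rw [sswap, sswap, hpi]
    exact (swap_braid_key _ _ _
      (Fin.ne_of_val_ne (by simp [pfin, qfin]))
      (Fin.ne_of_val_ne (by simp only [pfin, qfin]; omega))
      (Fin.ne_of_val_ne (by simp only [pfin, qfin]; omega))).symm

lemma sgsg_mul_ag {i j : Fin (n - 1)} (h : Nat.dist i j = 1) :
    ag (n := n) j * (sg i * sg j) = (sg i * sg j) * ag i := by
  have hji : Nat.dist (j : ℕ) (i : ℕ) = 1 := by rwa [Nat.dist_comm]
  symm
  calc (sg (n := n) i * sg j) * ag i
      = sg i * ((ag i * ag j) * sg j) := by rw [mul_assoc, sg_mul_ag_adj h]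
    _ = ((sg i * ag i) * ag j) * sg j := by rw [← mul_assoc, ← mul_assoc]
    _ = ((ag i * sg i) * ag j) * sg j := by rw [sg_mul_ag_self]
    _ = (ag i * ((ag j * ag i) * sg i)) * sg j := by
        rw [mul_assoc (ag i), sg_mul_ag_adj hji]
    _ = (((ag i * ag i) * ag j) * sg i) * sg j := by
        rw [ag_comm j i, ← mul_assoc, ← mul_assoc]
    _ = ag j * (sg i * sg j) := by rw [ag_sq, one_mul, mul_assoc]

/-! ### generic ring helpers -/

section RingHelpers
variable {R : Type*} [Ring R]

lemma expand_one_add (x y : R) : (1 + x) * (1 + y) = 1 + x + y + x * y := by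
  rw [mul_add, mul_one, add_mul, one_mul]; abel

lemma comm_one_add {x y : R} (h : x * y = y * x) :
    (1 + x) * (1 + y) = (1 + y) * (1 + x) := by
  rw [expand_one_add, expand_one_add, h]; abel

lemma key_EET {x y s : R} (hx : x * x = 1) (hs : s * x = x * y * s) :
    (1 + x) * (1 + y) * s = (1 + x) * s * (1 + x) := by
  have h1 : s * (1 + x) = (1 + x * y) * s := by
    rw [mul_add, mul_one, hs, add_mul, one_mul]
  rw [mul_assoc (1 + x) s, h1, ← mul_assoc, expand_one_add, expand_one_add,
    ← mul_assoc x x y, hx, one_mul]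
  abel

lemma key_ETE {x y s : R} (hx : x * x = 1) (hy : y * y = 1) (hs : s * x = x * y * s) (hsy : s * y = y * s) :
    (1 + x) * s * (1 + x) = s * ((1 + x) * (1 + y)) := by
  have h1 : s * (1 + x) = (1 + x * y) * s := by
    rw [mul_add, mul_one, hs, add_mul, one_mul]
  have h2 : s * ((1 + x) * (1 + y)) = (1 + x * y) * ((1 + y) * s) := by
    rw [← mul_assoc, h1, mul_assoc]
    congr 1
    rw [mul_add, mul_one, hsy, add_mul, one_mul]
  rw [mul_assoc (1 + x) s, h1, ← mul_assoc, h2, ← mul_assoc]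
  congr 1
  rw [expand_one_add, expand_one_add, ← mul_assoc x x y, hx, one_mul,
    mul_assoc x y y, hy, mul_one]
  abel

end RingHelpers

/-! ### lifted to the group algebra -/

section GA
variable (i j : Fin (n - 1))

local notation "OF" => MonoidAlgebra.of ℂ (W n)

lemma A_sq : OF (ag i) * OF (ag i) = 1 := by rw [← map_mul, ag_sq, map_one]
lemma A_comm : OF (ag i) * OF (ag j) = OF (ag j) * OF (ag i) := by
  rw [← map_mul, ← map_mul, ag_comm]
lemma S_sq : OF (sg i) * OF (sg i) = 1 := by rw [← map_mul, sg_sq, map_one]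
lemma S_comm_far {i j : Fin (n - 1)} (h : 1 < Nat.dist i j) :
    OF (sg i) * OF (sg j) = OF (sg j) * OF (sg i) := by
  rw [← map_mul, ← map_mul, sg_comm_far h]
lemma S_braid {i j : Fin (n - 1)} (h : Nat.dist i j = 1) :
    OF (sg i) * OF (sg j) * OF (sg i) = OF (sg j) * OF (sg i) * OF (sg j) := by
  rw [← map_mul, ← map_mul, ← map_mul, ← map_mul, sg_braid h]
lemma SA_self : OF (sg i) * OF (ag i) = OF (ag i) * OF (sg i) := by
  rw [← map_mul, ← map_mul, sg_mul_ag_self]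
lemma SA_far {i j : Fin (n - 1)} (h : 1 < Nat.dist i j) :
    OF (sg j) * OF (ag i) = OF (ag i) * OF (sg j) := by
  rw [← map_mul, ← map_mul, sg_mul_ag_far h]
lemma SA_adj {i j : Fin (n - 1)} (h : Nat.dist i j = 1) :
    OF (sg j) * OF (ag i) = OF (ag i) * OF (ag j) * OF (sg j) := by
  rw [← map_mul, ← map_mul, ← map_mul, sg_mul_ag_adj h]
lemma SSA {i j : Fin (n - 1)} (h : Nat.dist i j = 1) :
    OF (ag j) * (OF (sg i) * OF (sg j)) = OF (sg i) * OF (sg j) * OF (ag i) := by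
  rw [← map_mul, ← map_mul, ← map_mul, sgsg_mul_ag h]

end GA

def genMap (n : ℕ) : Gen n → MonoidAlgebra ℂ (W n)
  | .T i => MonoidAlgebra.of ℂ (W n) (sg i)
  | .E i => (2⁻¹ : ℂ) • (1 + MonoidAlgebra.of ℂ (W n) (ag i))

end Aux

/-- There is a `ℂ`-algebra homomorphism `ψ : ℰ_n(1) → ℂ[W_n]` with
`ψ(T_i) = s_i` and `ψ(E_i) = ½(1 + t_i t_{i+1})`. -/
theorem stmt15 (n : ℕ) (hn : 2 ≤ n) :
    ∃ ψ : En1 n →ₐ[ℂ] MonoidAlgebra ℂ (W n),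
      ∀ i : Fin (n - 1),
        ψ (T i) = MonoidAlgebra.of ℂ (W n)
            (sgen n i (by have := i.isLt; omega)) ∧
        ψ (E i) = (2⁻¹ : ℂ) •
          (1 + MonoidAlgebra.of ℂ (W n)
            (tgen n ⟨i, by have := i.isLt; omega⟩ *
             tgen n ⟨i + 1, by have := i.isLt; omega⟩)) := by
  classical
  set ψ₀ : FA n →ₐ[ℂ] MonoidAlgebra ℂ (W n) := FreeAlgebra.lift ℂ (Aux.genMap n) with hψ₀
  have hTapp : ∀ i : Fin (n - 1),
      ψ₀ (fT i) = MonoidAlgebra.of ℂ (W n) (Aux.sg i) := by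
    intro i; simp [hψ₀, fT, Aux.genMap]
  have hEapp : ∀ i : Fin (n - 1),
      ψ₀ (fE i) = (2⁻¹ : ℂ) • (1 + MonoidAlgebra.of ℂ (W n) (Aux.ag i)) := by
    intro i; simp [hψ₀, fE, Aux.genMap]
  have hrel : ∀ ⦃x y : FA n⦄, E1Rel n x y → ψ₀ x = ψ₀ y := by
    intro x y h
    induction h with
    | @TTfar i j h =>
      rw [map_mul, map_mul, hTapp, hTapp, Aux.S_comm_far h]
    | @braid i j h =>
      rw [map_mul, map_mul, map_mul, map_mul, hTapp, hTapp, Aux.S_braid h]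
    | Eidem i =>
      rw [map_mul, hEapp]
      rw [smul_mul_smul_comm, Aux.expand_one_add, Aux.A_sq]
      module
    | EE i j =>
      rw [map_mul, map_mul, hEapp, hEapp, smul_mul_smul_comm, smul_mul_smul_comm,
        Aux.comm_one_add (Aux.A_comm i j)]
    | ET i =>
      rw [map_mul, map_mul, hEapp, hTapp, smul_mul_assoc, mul_smul_comm]
      congr 1
      rw [add_mul, one_mul, mul_add, mul_one, Aux.SA_self]
    | @ETfar i j h =>
      rw [map_mul, map_mul, hEapp, hTapp, smul_mul_assoc, mul_smul_comm]
      congr 1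
      rw [add_mul, one_mul, mul_add, mul_one, Aux.SA_far h]
    | @ETT i j h =>
      rw [map_mul, map_mul, map_mul, map_mul, hEapp, hEapp, hTapp, hTapp,
        smul_mul_assoc, mul_smul_comm]
      congr 1
      rw [add_mul, one_mul, mul_add, mul_one, Aux.SSA h]
    | @EET i j h =>
      rw [map_mul, map_mul, map_mul, map_mul, hEapp, hEapp, hTapp]
      rw [smul_mul_smul_comm, smul_mul_assoc, smul_mul_assoc, smul_mul_smul_comm]
      congr 1
      exact Aux.key_EET (Aux.A_sq i) (Aux.SA_adj h)
    | @ETE i j h =>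
      rw [map_mul, map_mul, map_mul, map_mul, hEapp, hTapp, hEapp]
      rw [smul_mul_assoc, smul_mul_smul_comm, smul_mul_smul_comm, mul_smul_comm]
      congr 1
      exact Aux.key_ETE (Aux.A_sq i) (Aux.A_sq j) (Aux.SA_adj h) (Aux.SA_self j)
    | Tsq i =>
      rw [map_mul, map_one, hTapp, Aux.S_sq]
  refine ⟨RingQuot.liftAlgHom ℂ ⟨ψ₀, hrel⟩, fun i => ⟨?_, ?_⟩⟩
  · rw [T, RingQuot.liftAlgHom_mkAlgHom_apply, hTapp]
    rfl
  · rw [E, RingQuot.liftAlgHom_mkAlgHom_apply, hEapp]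
    rfl
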